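/- arXiv:1402.6957 — 2 statements merged into one kernel-verified Lean document; each statement's English description precedes it below -/
import Mathlib

section
/- For each prime p let ℤ(p^∞) denote the Prüfer p-group, realized as the p-primary component of ℚ/ℤ. Then the abelian groups ℚ × ∏_p ℤ(p^∞) and ∏_p ℤ(p^∞), where the product ranges over all primes p, are isomorphic. -/
/-- The group `ℚ/ℤ`, the quotient of the rationals by the integers. -/
abbrev RatModInt : Type := ℚ ⧸ AddSubgroup.zmultiples (1 : ℚ)

/-- The Prüfer `p`-group `ℤ(p^∞)`, realized as the `p`-primary component of `ℚ/ℤ`,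
i.e. the subgroup of elements annihilated by some power of `p`. -/
def PruferGroup (p : Nat.Primes) : AddSubgroup RatModInt :=
  haveI : Fact p.1.Prime := ⟨p.2⟩
  AddCommGroup.primaryComponent RatModInt p.1

namespace PruferAux

noncomputable section

open AddSubgroup Finsupp

/-- The quotient map `ℚ → ℚ/ℤ` as an additive hom. -/
abbrev μ : ℚ →+ RatModInt := QuotientAddGroup.mk' (zmultiples (1 : ℚ))

lemma μ_eq_zero {r : ℚ} : μ r = 0 ↔ ∃ k : ℤ, (k : ℚ) = r := by
  rw [QuotientAddGroup.mk'_apply, QuotientAddGroup.eq_zero_iff]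
  simp [AddSubgroup.mem_zmultiples_iff, zsmul_eq_mul]

lemma den_nsmul_μ (r : ℚ) : r.den • μ r = 0 := by
  rw [← map_nsmul, μ_eq_zero]
  exact ⟨r.num, by rw [nsmul_eq_mul]; push_cast; rw [Rat.mul_comm, Rat.mul_den_eq_num]⟩

lemma finOrder (x : RatModInt) : IsOfFinAddOrder x := by
  induction x using QuotientAddGroup.induction_on with
  | H r => exact isOfFinAddOrder_iff_nsmul_eq_zero.mpr ⟨r.den, r.pos, den_nsmul_μ r⟩

lemma orderPos (x : RatModInt) : 0 < addOrderOf x := (finOrder x).addOrderOf_pos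

lemma den_dvd_of_nsmul_eq_zero {r : ℚ} {n : ℕ} (h : n • μ r = 0) : r.den ∣ n := by
  rw [← map_nsmul, μ_eq_zero] at h
  obtain ⟨k, hk⟩ := h
  rw [nsmul_eq_mul] at hk
  have h2 : (n : ℤ) * r.num = k * r.den := by
    have : ((n : ℤ) * r.num : ℚ) = ((k * r.den : ℤ) : ℚ) := by
      push_cast
      rw [← Rat.mul_den_eq_num, hk]
      ring
    exact_mod_cast this
  have hd : (r.den : ℤ) ∣ (n : ℤ) * r.num := ⟨k, by linarith [h2]⟩
  have hd2 : r.den ∣ n * r.num.natAbs := by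
    have := Int.natAbs_dvd_natAbs.mpr hd
    simpa [Int.natAbs_mul] using this
  exact (Nat.Coprime.dvd_of_dvd_mul_right (r.reduced.symm) hd2)

lemma den_dvd_addOrderOf (r : ℚ) : r.den ∣ addOrderOf (μ r) :=
  den_dvd_of_nsmul_eq_zero (addOrderOf_nsmul_eq_zero (μ r))

section Prime

variable (p : ℕ) [hp : Fact p.Prime]

/-- primary part predicate -/
def P (x : RatModInt) : Prop := ∃ n : ℕ, addOrderOf x = p ^ n

/-- order coprime to `p` predicate -/
def C (x : RatModInt) : Prop := ¬ p ∣ addOrderOf x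

variable {p}

lemma P_zero : P p (0 : RatModInt) := ⟨0, by simp⟩

lemma C_zero : C p (0 : RatModInt) := by
  simp [C, Nat.Prime.one_lt hp.out, Nat.dvd_one, hp.out.ne_one]

lemma mem_primary_iff {x : RatModInt} : x ∈ AddCommGroup.primaryComponent RatModInt p ↔ P p x :=
  AddCommGroup.mem_primaryComponent_iff_addOrderOf

lemma C_add {a b : RatModInt} (ha : C p a) (hb : C p b) : C p (a + b) := by
  intro hdvd
  have hlcm := (AddCommute.all a b).addOrderOf_add_dvd_lcm
  have := hdvd.trans hlcm
  rcases (Nat.Prime.dvd_mul hp.out).mp (this.trans (Nat.lcm_dvd_mul _ _)) with h | h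
  · exact ha h
  · exact hb h

lemma C_neg {a : RatModInt} (ha : C p a) : C p (-a) := by
  simpa [C, addOrderOf_neg] using ha

lemma C_sub {a b : RatModInt} (ha : C p a) (hb : C p b) : C p (a - b) := by
  simpa [sub_eq_add_neg] using C_add ha (C_neg hb)

lemma exists_decomp (x : RatModInt) : ∃ y : RatModInt, P p y ∧ C p (x - y) := by
  set n := addOrderOf x with hn
  have hn0 : n ≠ 0 := (orderPos x).ne'
  set k := n.factorization p with hk
  have hmn : p ^ k * (n / p ^ k) = n := Nat.ordProj_mul_ordCompl_eq_self n p
  set m := n / p ^ k with hmdef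
  have hcop : Nat.Coprime (p ^ k) m := Nat.Coprime.pow_left k (Nat.coprime_ordCompl hp.out hn0)
  have hco : IsCoprime ((p : ℤ) ^ k) (m : ℤ) := by
    rw [Int.isCoprime_iff_gcd_eq_one]
    have : ((p : ℤ)) ^ k = ((p ^ k : ℕ) : ℤ) := by push_cast; ring
    rw [this, Int.gcd_natCast_natCast]
    exact hcop
  obtain ⟨a, b, hab⟩ := hco
  have hzero : ((n : ℕ) : ℤ) • x = 0 := by
    rw [natCast_zsmul]; exact addOrderOf_nsmul_eq_zero x
  refine ⟨(b * (m : ℤ)) • x, ?_, ?_⟩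
  · -- primary
    have key : ((p ^ k : ℕ) : ℤ) • ((b * (m : ℤ)) • x) = b • (((n : ℕ) : ℤ) • x) := by
      rw [smul_smul, smul_smul]
      congr 1
      push_cast [← hmn]
      ring
    have hsmul : (p ^ k : ℕ) • ((b * (m : ℤ)) • x) = 0 := by
      rw [← natCast_zsmul, key, hzero, smul_zero]
    obtain ⟨j, _, hj⟩ := (Nat.dvd_prime_pow hp.out).mp (addOrderOf_dvd_of_nsmul_eq_zero hsmul)
    exact ⟨j, hj⟩
  · -- coprime part
    have hxy : x - (b * (m : ℤ)) • x = (a * (p : ℤ) ^ k) • x := by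
      calc x - (b * (m : ℤ)) • x = (1 : ℤ) • x - (b * (m : ℤ)) • x := by rw [one_zsmul]
        _ = (1 - b * (m : ℤ)) • x := by rw [sub_zsmul]; abel
        _ = (a * (p : ℤ) ^ k) • x := by rw [← hab]; congr 1; ring
    have key : ((m : ℕ) : ℤ) • ((a * (p : ℤ) ^ k) • x) = a • (((n : ℕ) : ℤ) • x) := by
      rw [smul_smul, smul_smul]
      congr 1
      push_cast [← hmn]
      ring
    have hsmul : m • ((a * (p : ℤ) ^ k) • x) = 0 := by
      rw [← natCast_zsmul, key, hzero, smul_zero]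
    intro hdvd
    rw [hxy] at hdvd
    exact Nat.not_dvd_ordCompl hp.out hn0
      (hdvd.trans (addOrderOf_dvd_of_nsmul_eq_zero hsmul))

lemma decomp_unique {x y₁ y₂ : RatModInt} (h₁ : P p y₁) (hc₁ : C p (x - y₁))
    (h₂ : P p y₂) (hc₂ : C p (x - y₂)) : y₁ = y₂ := by
  have hPd : P p (y₁ - y₂) := by
    have := AddSubgroup.sub_mem (AddCommGroup.primaryComponent RatModInt p)
      (mem_primary_iff.mpr h₁) (mem_primary_iff.mpr h₂)
    exact mem_primary_iff.mp this
  have hCd : C p (y₁ - y₂) := by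
    have := C_sub hc₂ hc₁
    have heq : (x - y₂) - (x - y₁) = y₁ - y₂ := by abel
    rwa [heq] at this
  obtain ⟨j, hj⟩ := hPd
  have hj0 : j = 0 := by
    by_contra hne
    exact hCd (hj ▸ dvd_pow_self p hne)
  have : addOrderOf (y₁ - y₂) = 1 := by rw [hj, hj0, pow_zero]
  have := AddMonoid.addOrderOf_eq_one_iff.mp this
  exact sub_eq_zero.mp this

end Prime

section Proj

variable (q : Nat.Primes)

instance factPrime : Fact q.1.Prime := ⟨q.2⟩

/-- The projection of `ℚ/ℤ` onto its `p`-primary component. -/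
def proj : RatModInt →+ PruferGroup q where
  toFun x := ⟨Classical.choose (exists_decomp (p := q.1) x),
    mem_primary_iff.mpr (Classical.choose_spec (exists_decomp (p := q.1) x)).1⟩
  map_zero' := by
    have hs := Classical.choose_spec (exists_decomp (p := q.1) (0 : RatModInt))
    exact Subtype.ext (decomp_unique hs.1 hs.2 P_zero (by simpa using C_zero))
  map_add' x y := by
    have hx := Classical.choose_spec (exists_decomp (p := q.1) x)
    have hy := Classical.choose_spec (exists_decomp (p := q.1) y)
    have hxy := Classical.choose_spec (exists_decomp (p := q.1) (x + y))
    refine Subtype.ext (decomp_unique hxy.1 hxy.2 ?_ ?_)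
    · exact mem_primary_iff.mp (AddSubgroup.add_mem _ (mem_primary_iff.mpr hx.1)
        (mem_primary_iff.mpr hy.1))
    · have := C_add hx.2 hy.2
      have heq : (x - Classical.choose (exists_decomp (p := q.1) x)) +
          (y - Classical.choose (exists_decomp (p := q.1) y)) =
          (x + y) - (Classical.choose (exists_decomp (p := q.1) x) +
            Classical.choose (exists_decomp (p := q.1) y)) := by abel
      rwa [heq] at this

lemma proj_spec (x : RatModInt) : C q.1 (x - (proj q x : RatModInt)) :=
  (Classical.choose_spec (exists_decomp (p := q.1) x)).2

lemma proj_ne_zero {r : ℚ} (h : q.1 ∣ r.den) : proj q (μ r) ≠ 0 := by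
  intro h0
  have hc : C q.1 (μ r) := by
    have := proj_spec q (μ r)
    rw [h0] at this
    simpa using this
  exact hc (dvd_trans h (den_dvd_addOrderOf r))

end Proj

/-- the rational `∑ f n / p^(n+1)` -/
def ratOf (q : Nat.Primes) : (ℕ →₀ ℚ) →+ ℚ :=
  Finsupp.liftAddHom fun n => AddMonoidHom.mulRight (((q.1 : ℚ))⁻¹ ^ (n + 1))

/-- The embedding `ℚ^(⊕ℕ) → ∏ₚ ℤ(p^∞)`. -/
def Φ : (ℕ →₀ ℚ) →+ ((q : Nat.Primes) → PruferGroup q) where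
  toFun f q := proj q (μ (ratOf q f))
  map_zero' := by funext q; simp
  map_add' f g := by funext q; simp

lemma ratOf_apply (q : Nat.Primes) (f : ℕ →₀ ℚ) :
    ratOf q f = ∑ n ∈ f.support, f n * ((q.1 : ℚ))⁻¹ ^ (n + 1) := by
  simp [ratOf, Finsupp.liftAddHom_apply, Finsupp.sum]

lemma Φ_injective : Function.Injective Φ := by
  rw [injective_iff_map_eq_zero]
  intro f hf
  by_contra hne
  have hsupp : f.support.Nonempty := Finsupp.support_nonempty_iff.mpr hne
  set N := f.support.max' hsupp with hN
  have hNmem : N ∈ f.support := f.support.max'_mem hsupp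
  set D : ℕ := ∏ n ∈ f.support, (f n).den with hD
  have hD0 : D ≠ 0 := by
    rw [hD]
    exact Finset.prod_ne_zero_iff.mpr fun n _ => (f n).den_nz
  have hdenDvd : ∀ n ∈ f.support, (f n).den ∣ D := fun n hn => Finset.dvd_prod_of_mem _ hn
  set A : ℤ := (f N).num * ((D / (f N).den : ℕ) : ℤ) with hA
  have hA0 : A ≠ 0 := by
    apply mul_ne_zero
    · exact Rat.num_ne_zero.mpr (Finsupp.mem_support_iff.mp hNmem)
    · have : D / (f N).den ≠ 0 :=
        Nat.div_ne_zero_iff.mpr ⟨(f N).den_nz, Nat.le_of_dvd (Nat.pos_of_ne_zero hD0)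
          (hdenDvd N hNmem)⟩
      exact_mod_cast Nat.cast_ne_zero.mpr this
  obtain ⟨p, hple, hp⟩ := Nat.exists_infinite_primes (max (A.natAbs + 1) (D + 1))
  have hpA : A.natAbs < p := lt_of_lt_of_le (by omega : A.natAbs < max (A.natAbs + 1) (D + 1)) hple
  have hpD : D < p := lt_of_lt_of_le (by omega : D < max (A.natAbs + 1) (D + 1)) hple
  set q : Nat.Primes := ⟨p, hp⟩ with hq
  have hpne : (p : ℚ) ≠ 0 := Nat.cast_ne_zero.mpr hp.pos.ne'
  set S : ℤ := ∑ n ∈ f.support, (f n).num * ((D / (f n).den : ℕ) : ℤ) * (p : ℤ) ^ (N - n)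
    with hS
  -- each term of S, cast to ℚ, equals the corresponding term of `ratOf q f * (p^(N+1) * D)`
  have key : ∀ n ∈ f.support,
      (((f n).num * ((D / (f n).den : ℕ) : ℤ) * (p : ℤ) ^ (N - n) : ℤ) : ℚ)
        = f n * ((p : ℚ))⁻¹ ^ (n + 1) * ((p : ℚ) ^ (N + 1) * (D : ℚ)) := by
    intro n hn
    have hle : n ≤ N := Finset.le_max' _ _ hn
    have hdne : ((f n).den : ℚ) ≠ 0 := Nat.cast_ne_zero.mpr (f n).den_nz
    have hsplit : (p : ℚ) ^ (N + 1) = (p : ℚ) ^ (n + 1) * (p : ℚ) ^ (N - n) := by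
      rw [← pow_add]
      congr 1
      omega
    have hDden : ((D / (f n).den : ℕ) : ℚ) * ((f n).den : ℚ) = (D : ℚ) := by
      rw [← Nat.cast_mul, Nat.div_mul_cancel (hdenDvd n hn)]
    have hnum : ((f n).num : ℚ) = f n * ((f n).den : ℚ) := (Rat.mul_den_eq_num _).symm
    simp only [Int.cast_mul, Int.cast_pow, Int.cast_natCast]
    rw [hsplit, hnum, ← hDden]
    field_simp
    rw [one_div, inv_pow, mul_assoc _ _ ((p : ℚ) ^ (n + 1)), inv_mul_cancel₀ (pow_ne_zero _ hpne)]
    ring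
  have hcast : ((S : ℤ) : ℚ) = ratOf q f * ((p : ℚ) ^ (N + 1) * (D : ℚ)) := by
    rw [hS, ratOf_apply, Finset.sum_mul, Int.cast_sum]
    exact Finset.sum_congr rfl key
  -- p does not divide S
  have hrest : (p : ℤ) ∣ S - A := by
    have : S - A = ∑ n ∈ f.support.erase N, (f n).num * ((D / (f n).den : ℕ) : ℤ)
        * (p : ℤ) ^ (N - n) := by
      rw [hS, ← Finset.add_sum_erase _ _ hNmem, hA, Nat.sub_self, pow_zero, mul_one]
      ring
    rw [this]
    refine Finset.dvd_sum fun n hn => ?_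
    have hlt : n < N := lt_of_le_of_ne (Finset.le_max' _ _ (Finset.mem_of_mem_erase hn))
      (Finset.ne_of_mem_erase hn)
    exact Dvd.dvd.mul_left (dvd_pow_self (p : ℤ) (by omega : N - n ≠ 0)) _
  have hSnd : ¬ (p : ℤ) ∣ S := by
    intro hdvd
    have hdA : (p : ℤ) ∣ A := by
      have := dvd_sub hdvd hrest
      simpa using this
    have : A = 0 := Int.eq_zero_of_abs_lt_dvd hdA (by
      rw [Int.abs_eq_natAbs]
      exact_mod_cast hpA)
    exact hA0 this
  -- p divides the denominator of r = ratOf q f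
  set r : ℚ := ratOf q f with hr
  have hid : r.num * ((p : ℤ) ^ (N + 1) * (D : ℤ)) = S * r.den := by
    have : ((r.num * ((p : ℤ) ^ (N + 1) * (D : ℤ)) : ℤ) : ℚ) = ((S * r.den : ℤ) : ℚ) := by
      push_cast
      rw [← Rat.mul_den_eq_num]
      rw [hcast]
      ring
    exact_mod_cast this
  have hpdvd : (p : ℤ) ∣ S * r.den := by
    rw [← hid]
    exact Dvd.dvd.mul_left (dvd_mul_of_dvd_left (dvd_pow_self _ (Nat.succ_ne_zero N)) _) _
  have hpprime : Prime (p : ℤ) := Nat.prime_iff_prime_int.mp hp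
  have hpden : p ∣ r.den := by
    rcases hpprime.dvd_mul.mp hpdvd with h | h
    · exact absurd h hSnd
    · exact_mod_cast Int.ofNat_dvd.mp (by simpa using h)
  exact proj_ne_zero q hpden (congrFun hf q)

instance : DivisibleBy (ℕ →₀ ℚ) ℤ where
  div a n := (n : ℚ)⁻¹ • a
  div_zero a := by simp
  div_cancel a hn := by
    rw [← Int.cast_smul_eq_zsmul ℚ, smul_smul, mul_inv_cancel₀ (by exact_mod_cast hn), one_smul]

/-- A split injection gives a direct product decomposition. -/
def splitEquiv {Q G : Type*} [AddCommGroup Q] [AddCommGroup G] (i : Q →+ G) (ρ : G →+ Q)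
    (h : ρ.comp i = AddMonoidHom.id Q) : G ≃+ Q × ρ.ker where
  toFun g := (ρ g, ⟨g - i (ρ g), by
    have hx : ρ (i (ρ g)) = ρ g := DFunLike.congr_fun h (ρ g)
    simp [AddMonoidHom.mem_ker, hx]⟩)
  invFun x := i x.1 + (x.2 : G)
  left_inv g := by simp
  right_inv x := by
    have hx : ∀ y, ρ (i y) = y := fun y => DFunLike.congr_fun h y
    have hk : ρ (x.2 : G) = 0 := x.2.2
    refine Prod.ext ?_ (Subtype.ext ?_)
    · simp [hx, hk]
    · simp [hx, hk]
  map_add' g₁ g₂ := by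
    refine Prod.ext ?_ (Subtype.ext ?_)
    · simp
    · simp
      abel

/-- `ℚ × (ℕ →₀ ℚ)` is isomorphic to `ℕ →₀ ℚ`. -/
def absorbRat : ℚ × (ℕ →₀ ℚ) ≃+ (ℕ →₀ ℚ) :=
  (AddEquiv.prodCongr (AddEquiv.finsuppUnique (ι := Unit)).symm (AddEquiv.refl _)).trans <|
    (Finsupp.sumFinsuppAddEquivProdFinsupp).symm.trans
      (Finsupp.domCongr ((Equiv.sumComm Unit ℕ).trans
        ((Equiv.optionEquivSumPUnit.{0} ℕ).symm.trans (Denumerable.eqv (Option ℕ)))))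

end

end PruferAux

/-- `ℚ × ∏_p ℤ(p^∞)` is isomorphic to `∏_p ℤ(p^∞)`, the product ranging over all primes. -/
theorem rat_prod_pi_prufer_equiv_pi_prufer_over_primes :
    Nonempty ((ℚ × ((p : Nat.Primes) → PruferGroup p)) ≃+
      ((p : Nat.Primes) → PruferGroup p)) := by
  classical
  obtain ⟨ρ, hρ⟩ := (Module.Baer.of_divisible (ℕ →₀ ℚ)).extension_property_addMonoidHom
    PruferAux.Φ PruferAux.Φ_injective (AddMonoidHom.id _)
  let e1 := PruferAux.splitEquiv PruferAux.Φ ρ hρ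
  exact ⟨((AddEquiv.refl ℚ).prodCongr e1).trans <|
    (AddEquiv.prodAssoc (M := ℚ) (N := ℕ →₀ ℚ) (P := ρ.ker)).symm.trans <|
    (PruferAux.absorbRat.prodCongr (AddEquiv.refl _)).trans e1.symm⟩
end

section
/- For each prime p let ℤ(p^∞) denote the Prüfer p-group, realized as the p-primary component of ℚ/ℤ. Then the direct product ∏_p ℤ(p^∞), where p ranges over all primes, is isomorphic as an abelian group to the circle group 𝕋 = ℝ/ℤ. -/
abbrev PruferProd : Type := (p : Nat.Primes) → PruferGroup p

/-- The circle group `ℝ/ℤ`. -/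
abbrev RealModInt : Type := ℝ ⧸ AddSubgroup.zmultiples (1 : ℝ)

open Cardinal DirectSum

theorem mem_prufer_def {p : Nat.Primes} (x : RatModInt) :
    x ∈ PruferGroup p ↔ ∃ k : ℕ, addOrderOf x = (p : ℕ) ^ k := by
  show (∃ k : ℕ, (p:ℕ) ^ k • x = 0) ↔ _
  constructor
  · rintro ⟨k, hk⟩
    obtain ⟨j, _, hj⟩ := (Nat.dvd_prime_pow p.2).mp (addOrderOf_dvd_of_nsmul_eq_zero hk)
    exact ⟨j, hj⟩
  · rintro ⟨k, hk⟩
    exact ⟨k, hk ▸ addOrderOf_nsmul_eq_zero x⟩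

theorem intCast_mem_zmultiples_one {R : Type} [Ring R] (k : ℤ) :
    (k : R) ∈ AddSubgroup.zmultiples (1 : R) := ⟨k, by simp⟩


variable {W : Type} [AddCommGroup W]

theorem zsmul_cancel (htf : ∀ (n : ℤ) (x : W), n ≠ 0 → n • x = 0 → x = 0)
    {n : ℤ} (hn : n ≠ 0) {x y : W} (h : n • x = n • y) : x = y := by
  have := htf n (x - y) hn (by rw [smul_sub, h, sub_self])
  exact sub_eq_zero.mp this

noncomputable def qsmul (hdiv : ∀ (n : ℤ), n ≠ 0 → ∀ x : W, ∃ y : W, n • y = x) (q : ℚ) (x : W) : W :=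
  Classical.choose (hdiv q.den (by exact_mod_cast q.den_nz) (q.num • x))

theorem qsmul_spec (hdiv : ∀ (n : ℤ), n ≠ 0 → ∀ x : W, ∃ y : W, n • y = x) (q : ℚ) (x : W) :
    (q.den : ℤ) • qsmul hdiv q x = q.num • x :=
  Classical.choose_spec (hdiv q.den (by exact_mod_cast q.den_nz) (q.num • x))

theorem rat_cross {a b : ℤ} {q : ℚ} (hb : b ≠ 0) (hq : (a : ℚ) / (b : ℚ) = q) :
    a * (q.den : ℤ) = q.num * b := by
  have hbq : (b : ℚ) ≠ 0 := Int.cast_ne_zero.mpr hb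
  have h1 : (a : ℚ) = q * b := by rw [← hq, div_mul_cancel₀ _ hbq]
  have h2 : (a : ℚ) * q.den = q.num * b := by
    rw [h1]; rw [mul_right_comm, Rat.mul_den_eq_num]
  exact_mod_cast h2

theorem qsmul_eq (hdiv : ∀ (n : ℤ), n ≠ 0 → ∀ x : W, ∃ y : W, n • y = x)
    (htf : ∀ (n : ℤ) (x : W), n ≠ 0 → n • x = 0 → x = 0)
    {a b : ℤ} {q : ℚ} (hb : b ≠ 0) (hq : (a : ℚ) / (b : ℚ) = q) {x y : W}
    (h : b • y = a • x) : y = qsmul hdiv q x := by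
  have hden : ((q.den : ℤ)) ≠ 0 := by exact_mod_cast q.den_nz
  apply zsmul_cancel htf (mul_ne_zero hb hden)
  calc (b * (q.den:ℤ)) • y = (q.den:ℤ) • (b • y) := by rw [mul_comm, mul_smul]
    _ = (q.den:ℤ) • (a • x) := by rw [h]
    _ = (a * q.den) • x := by rw [← mul_smul, mul_comm]
    _ = (q.num * b) • x := by rw [rat_cross hb hq]
    _ = b • ((q.num:ℤ) • x) := by rw [← mul_smul, mul_comm]
    _ = b • ((q.den:ℤ) • qsmul hdiv q x) := by rw [qsmul_spec]
    _ = (b * (q.den:ℤ)) • qsmul hdiv q x := by rw [← mul_smul]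

/-- The `ℚ`-module structure on a divisible torsion-free abelian group. -/
noncomputable def ratModule (hdiv : ∀ (n : ℤ), n ≠ 0 → ∀ x : W, ∃ y : W, n • y = x)
    (htf : ∀ (n : ℤ) (x : W), n ≠ 0 → n • x = 0 → x = 0) : Module ℚ W :=
  letI : SMul ℚ W := ⟨qsmul hdiv⟩
  have hden : ∀ q : ℚ, ((q.den:ℤ)) ≠ 0 := fun q => by exact_mod_cast q.den_nz
  Module.ofMinimalAxioms
    (fun q x z => by
      show qsmul hdiv q (x + z) = qsmul hdiv q x + qsmul hdiv q z
      refine (qsmul_eq hdiv htf (hden q) (Rat.num_div_den q) ?_).symm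
      rw [smul_add, qsmul_spec, qsmul_spec, ← smul_add])
    (fun q r x => by
      show qsmul hdiv (q + r) x = qsmul hdiv q x + qsmul hdiv r x
      refine (qsmul_eq hdiv htf (b := (q.den:ℤ) * (r.den:ℤ))
        (a := q.num * r.den + q.den * r.num)
        (mul_ne_zero (hden q) (hden r)) ?_ ?_).symm
      · have hq : ((q.den:ℚ)) ≠ 0 := Nat.cast_ne_zero.mpr q.den_nz
        have hr : ((r.den:ℚ)) ≠ 0 := Nat.cast_ne_zero.mpr r.den_nz
        push_cast
        rw [div_eq_iff (mul_ne_zero hq hr),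
          show (q+r)*((q.den:ℚ)*(r.den:ℚ)) = (q*q.den)*r.den + q.den*(r*r.den) by ring,
          Rat.mul_den_eq_num, Rat.mul_den_eq_num]
      · rw [smul_add, add_smul]
        calc ((q.den:ℤ) * (r.den:ℤ)) • qsmul hdiv q x + ((q.den:ℤ) * (r.den:ℤ)) • qsmul hdiv r x
            = (r.den:ℤ) • ((q.den:ℤ) • qsmul hdiv q x) + (q.den:ℤ) • ((r.den:ℤ) • qsmul hdiv r x) := by
              rw [← mul_smul, ← mul_smul, mul_comm ((q.den:ℤ))]
          _ = (r.den:ℤ) • ((q.num:ℤ) • x) + (q.den:ℤ) • ((r.num:ℤ) • x) := by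
              rw [qsmul_spec, qsmul_spec]
          _ = (q.num * (r.den:ℤ)) • x + ((q.den:ℤ) * r.num) • x := by
              rw [← mul_smul, ← mul_smul, mul_comm ((r.den:ℤ))]
          _ = _ := by rw [← add_smul])
    (fun q r x => by
      show qsmul hdiv (q * r) x = qsmul hdiv q (qsmul hdiv r x)
      refine (qsmul_eq hdiv htf (b := (q.den:ℤ) * (r.den:ℤ)) (a := q.num * r.num)
        (mul_ne_zero (hden q) (hden r)) ?_ ?_).symm
      · have hq : ((q.den:ℚ)) ≠ 0 := Nat.cast_ne_zero.mpr q.den_nz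
        have hr : ((r.den:ℚ)) ≠ 0 := Nat.cast_ne_zero.mpr r.den_nz
        push_cast
        rw [div_eq_iff (mul_ne_zero hq hr),
          show q*r*((q.den:ℚ)*(r.den:ℚ)) = (q*q.den)*(r*r.den) by ring,
          Rat.mul_den_eq_num, Rat.mul_den_eq_num]
      · calc ((q.den:ℤ) * (r.den:ℤ)) • qsmul hdiv q (qsmul hdiv r x)
            = (r.den:ℤ) • ((q.den:ℤ) • qsmul hdiv q (qsmul hdiv r x)) := by rw [mul_comm, mul_smul]
          _ = (r.den:ℤ) • ((q.num:ℤ) • qsmul hdiv r x) := by rw [qsmul_spec]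
          _ = (q.num:ℤ) • ((r.den:ℤ) • qsmul hdiv r x) := by rw [← mul_smul, mul_comm, mul_smul]
          _ = (q.num:ℤ) • ((r.num:ℤ) • x) := by rw [qsmul_spec]
          _ = (q.num * r.num) • x := by rw [← mul_smul])
    (fun x => by
      show qsmul hdiv 1 x = x
      exact (qsmul_eq hdiv htf (a := 1) (b := 1) one_ne_zero (by norm_num) (by norm_num)).symm)


theorem addEquiv_of_rat_modules (V W : Type) [AddCommGroup V] [AddCommGroup W]
    [Module ℚ V] [Module ℚ W] (hV : ℵ₀ < #V) (hVW : #V = #W) :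
    Nonempty (V ≃+ W) := by
  obtain ⟨⟨ι, b⟩⟩ := Module.Free.exists_basis (R := ℚ) (M := V)
  obtain ⟨⟨κ, c⟩⟩ := Module.Free.exists_basis (R := ℚ) (M := W)
  have hW : ℵ₀ < #W := hVW ▸ hV
  have hVcard : #V = #(ι →₀ ℚ) := mk_congr b.repr.toEquiv
  have hWcard : #W = #(κ →₀ ℚ) := mk_congr c.repr.toEquiv
  have hι : Infinite ι := by
    by_contra h
    have : Finite ι := not_infinite_iff_finite.mp h
    have : Countable (ι →₀ ℚ) := by infer_instance
    exact absurd (hVcard ▸ mk_le_aleph0) (not_le.mpr hV)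
  have hκ : Infinite κ := by
    by_contra h
    have : Finite κ := not_infinite_iff_finite.mp h
    have : Countable (κ →₀ ℚ) := by infer_instance
    exact absurd (hWcard ▸ mk_le_aleph0) (not_le.mpr hW)
  have h1 : max #ι ℵ₀ = #V := by rw [hVcard, mk_finsupp_of_infinite, Cardinal.mkRat]
  have h2 : max #κ ℵ₀ = #W := by rw [hWcard, mk_finsupp_of_infinite, Cardinal.mkRat]
  have hιV : #ι = #V := by
    rcases le_total #ι ℵ₀ with h | h
    · exact absurd (max_eq_right h ▸ h1).symm hV.ne'
    · rw [max_eq_left h] at h1; exact h1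
  have hκW : #κ = #W := by
    rcases le_total #κ ℵ₀ with h | h
    · exact absurd (max_eq_right h ▸ h2).symm hW.ne'
    · rw [max_eq_left h] at h2; exact h2
  obtain ⟨e⟩ := Cardinal.eq.mp (hιV.trans (hVW.trans hκW.symm))
  exact ⟨((b.repr.trans (Finsupp.domLCongr e)).trans c.repr.symm).toAddEquiv⟩

/-- Splitting of an abelian group along a retraction onto a subgroup. -/
def retractEquiv {A : Type} [AddCommGroup A] {T : AddSubgroup A}
    (r : A →+ T) (hr : ∀ t : T, r t = t) : A ≃+ T × (r.ker) where
  toFun a := (r a, ⟨a - r a, by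
    rw [AddMonoidHom.mem_ker, map_sub, hr, sub_self]⟩)
  invFun tk := tk.1 + tk.2.1
  left_inv a := by simp
  right_inv := fun ⟨t, k⟩ => by
    have hk : r k = 0 := k.2
    ext
    · simp [hk, hr]
    · simp [hk, hr]
  map_add' a b := by
    ext
    · simp
    · simp; abel


/-- For a divisible group, there is a retraction onto the torsion subgroup, and the
complementary kernel is divisible, torsion-free, and of full cardinality. -/
theorem split_off_torsion (A : Type) [AddCommGroup A]
    (hAdiv : ∀ (n : ℤ), n ≠ 0 → ∀ x : A, ∃ y : A, n • y = x)
    (hTA : Countable (AddCommGroup.torsion A))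
    (hA : #A = Cardinal.continuum) :
    ∃ (K : Type) (_ : AddCommGroup K),
      Nonempty (A ≃+ (AddCommGroup.torsion A) × K) ∧
      (∀ (n : ℤ), n ≠ 0 → ∀ x : K, ∃ y : K, n • y = x) ∧
      (∀ (n : ℤ) (x : K), n ≠ 0 → n • x = 0 → x = 0) ∧
      ℵ₀ < #K ∧ #K = Cardinal.continuum := by
  classical
  set T := AddCommGroup.torsion A with hT
  -- T is divisible
  haveI : DivisibleBy T ℤ := by
    refine divisibleByOfSMulRightSurj T ℤ ?_
    intro n hn t
    obtain ⟨y, hy⟩ := hAdiv n hn t.1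
    have hyt : y ∈ T := by
      obtain ⟨m, hm, hmt⟩ := isOfFinAddOrder_iff_nsmul_eq_zero.mp t.2
      rw [AddCommGroup.mem_torsion, isOfFinAddOrder_iff_zsmul_eq_zero]
      refine ⟨n * m, mul_ne_zero hn (by exact_mod_cast hm.ne'), ?_⟩
      rw [mul_comm, mul_smul, hy]
      exact_mod_cast hmt
    exact ⟨⟨y, hyt⟩, Subtype.ext (by simpa using hy)⟩
  -- retraction via Baer's criterion
  obtain ⟨r, hres⟩ := (Module.Baer.of_divisible T).extension_property_addMonoidHom
    T.subtype Subtype.coe_injective (AddMonoidHom.id T)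
  have hr : ∀ t : T, r t = t := fun t => DFunLike.congr_fun hres t
  have e := retractEquiv r hr
  set K := r.ker with hKdef
  have hKdiv : ∀ (n : ℤ), n ≠ 0 → ∀ x : K, ∃ y : K, n • y = x := by
    intro n hn x
    obtain ⟨y, hy⟩ := hAdiv n hn x.1
    have hz : y - (r y : A) ∈ r.ker := by
      rw [AddMonoidHom.mem_ker, map_sub, hr, sub_self]
    refine ⟨⟨y - (r y : A), hz⟩, Subtype.ext ?_⟩
    have hx0 : r x.1 = 0 := x.2
    push_cast
    rw [smul_sub, hy, ← AddSubgroup.coe_zsmul, ← map_zsmul, hy, hx0]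
    simp
  have hKtf : ∀ (n : ℤ) (x : K), n ≠ 0 → n • x = 0 → x = 0 := by
    intro n x hn h
    have h' : n • (x : A) = 0 := by
      rw [← AddSubgroup.coe_zsmul, h, AddSubgroup.coe_zero]
    have hxT : (x : A) ∈ T := isOfFinAddOrder_iff_zsmul_eq_zero.mpr ⟨n, hn, h'⟩
    have h1 : r x.1 = ⟨x.1, hxT⟩ := hr ⟨x.1, hxT⟩
    have h2 : r x.1 = 0 := x.2
    have : (x : A) = 0 := congrArg Subtype.val (h1.symm.trans h2)
    exact Subtype.ext this
  have hTle : #T ≤ ℵ₀ := mk_le_aleph0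
  have hcard : Cardinal.continuum = #T * #K := by
    rw [← hA, mk_congr e.toEquiv, mk_prod, lift_id, lift_id]
  have hKlt : ℵ₀ < #K := by
    by_contra hle
    push_neg at hle
    have : Cardinal.continuum ≤ ℵ₀ := by
      calc Cardinal.continuum = #T * #K := hcard
        _ ≤ ℵ₀ * ℵ₀ := mul_le_mul' hTle hle
        _ = ℵ₀ := by simp
    exact absurd this (not_le.mpr aleph0_lt_continuum)
  have hKcard : #K = Cardinal.continuum := by
    refine le_antisymm ?_ ?_
    · calc #K ≤ #A := mk_le_of_injective Subtype.val_injective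
        _ = Cardinal.continuum := hA
    · calc Cardinal.continuum = #T * #K := hcard
        _ ≤ ℵ₀ * #K := mul_le_mul_left hTle _
        _ = #K := by rw [Cardinal.mul_eq_max le_rfl hKlt.le, max_eq_right hKlt.le]
  exact ⟨K, inferInstance, ⟨e⟩, hKdiv, hKtf, hKlt, hKcard⟩

theorem master {A B : Type} [AddCommGroup A] [AddCommGroup B]
    (hAdiv : ∀ (n : ℤ), n ≠ 0 → ∀ x : A, ∃ y : A, n • y = x)
    (hBdiv : ∀ (n : ℤ), n ≠ 0 → ∀ x : B, ∃ y : B, n • y = x)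
    (eT : Nonempty ((AddCommGroup.torsion A) ≃+ (AddCommGroup.torsion B)))
    (hTA : Countable (AddCommGroup.torsion A))
    (hA : #A = Cardinal.continuum) (hB : #B = Cardinal.continuum) :
    Nonempty (A ≃+ B) := by
  obtain ⟨eTAB⟩ := eT
  have hTB : Countable (AddCommGroup.torsion B) := Countable.of_equiv _ eTAB.toEquiv
  obtain ⟨KA, _, ⟨eA⟩, hKAdiv, hKAtf, hKAlt, hKAcard⟩ := split_off_torsion A hAdiv hTA hA
  obtain ⟨KB, _, ⟨eB⟩, hKBdiv, hKBtf, hKBlt, hKBcard⟩ := split_off_torsion B hBdiv hTB hB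
  letI := ratModule hKAdiv hKAtf
  letI := ratModule hKBdiv hKBtf
  obtain ⟨eK⟩ := addEquiv_of_rat_modules KA KB hKAlt (hKAcard.trans hKBcard.symm)
  exact ⟨(eA.trans (AddEquiv.prodCongr eTAB eK)).trans eB.symm⟩




theorem ratModInt_torsion : AddMonoid.IsTorsion RatModInt := by
  intro x
  obtain ⟨q, rfl⟩ := QuotientAddGroup.mk_surjective x
  rw [isOfFinAddOrder_iff_nsmul_eq_zero]
  refine ⟨q.den, q.pos, ?_⟩
  have h : q.den • q = ((q.num : ℚ)) := by
    rw [nsmul_eq_mul, mul_comm]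
    exact Rat.mul_den_eq_num q
  rw [← QuotientAddGroup.mk_nsmul, h]
  exact (QuotientAddGroup.eq_zero_iff _).mpr (intCast_mem_zmultiples_one q.num)

instance : Countable RatModInt := Quotient.countable

theorem ratModInt_div : ∀ (n : ℤ), n ≠ 0 → ∀ x : RatModInt, ∃ y : RatModInt, n • y = x := by
  haveI : DivisibleBy ℚ ℕ := AddGroup.divisibleByNatOfDivisibleByInt _
  haveI : DivisibleBy RatModInt ℕ := QuotientAddGroup.divisibleBy _
  haveI : DivisibleBy RatModInt ℤ := AddGroup.divisibleByIntOfDivisibleByNat _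
  exact fun n hn x => ⟨DivisibleBy.div x n, DivisibleBy.div_cancel x hn⟩

theorem realModInt_div : ∀ (n : ℤ), n ≠ 0 → ∀ x : RealModInt, ∃ y : RealModInt, n • y = x := by
  haveI : DivisibleBy ℝ ℕ := AddGroup.divisibleByNatOfDivisibleByInt _
  haveI : DivisibleBy RealModInt ℕ := QuotientAddGroup.divisibleBy _
  haveI : DivisibleBy RealModInt ℤ := AddGroup.divisibleByIntOfDivisibleByNat _
  exact fun n hn x => ⟨DivisibleBy.div x n, DivisibleBy.div_cancel x hn⟩

theorem realModInt_card : #RealModInt = Cardinal.continuum := by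
  haveI : Fact ((0:ℝ) < 1) := ⟨one_pos⟩
  have e : RealModInt ≃ Set.Ico (0:ℝ) (0+1) := AddCircle.equivIco 1 0
  rw [mk_congr e, Cardinal.mk_Ico_real (by norm_num)]


noncomputable def ratToReal : RatModInt →+ RealModInt :=
  QuotientAddGroup.map _ _ (Rat.castHom ℝ).toAddMonoidHom
    (by
      rintro x ⟨k, rfl⟩
      simp only [AddSubgroup.mem_comap]
      convert intCast_mem_zmultiples_one (R := ℝ) k using 2
      push_cast
      simp)

theorem ratToReal_mk (q : ℚ) :
    ratToReal ((q : ℚ) : RatModInt) = ((q : ℝ) : RealModInt) := rfl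

theorem ratToReal_injective : Function.Injective ratToReal := by
  rw [injective_iff_map_eq_zero]
  intro x hx
  obtain ⟨q, rfl⟩ := QuotientAddGroup.mk_surjective x
  rw [ratToReal_mk, QuotientAddGroup.eq_zero_iff] at hx
  obtain ⟨k, hk⟩ := hx
  rw [QuotientAddGroup.eq_zero_iff]
  refine ⟨k, ?_⟩
  have : ((k : ℝ)) = (q : ℝ) := by simpa using hk
  have : (k : ℚ) = q := by exact_mod_cast this
  simpa using this

theorem ratToReal_range : ratToReal.range = AddCommGroup.torsion RealModInt := by
  apply le_antisymm
  · rintro _ ⟨x, rfl⟩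
    obtain ⟨n, npos, hn⟩ := isOfFinAddOrder_iff_nsmul_eq_zero.mp (ratModInt_torsion x)
    rw [AddCommGroup.mem_torsion, isOfFinAddOrder_iff_nsmul_eq_zero]
    exact ⟨n, npos, by rw [← map_nsmul, hn, map_zero]⟩
  · intro x hx
    obtain ⟨n, npos, hn⟩ := isOfFinAddOrder_iff_nsmul_eq_zero.mp hx
    obtain ⟨r, rfl⟩ := QuotientAddGroup.mk_surjective x
    rw [← QuotientAddGroup.mk_nsmul, QuotientAddGroup.eq_zero_iff] at hn
    obtain ⟨k, hk⟩ := hn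
    have hn0 : (n : ℝ) ≠ 0 := Nat.cast_ne_zero.mpr npos.ne'
    have hr : r = (k : ℝ) / n := by
      field_simp
      rw [mul_comm]
      simpa [nsmul_eq_mul] using hk.symm
    refine ⟨((k : ℚ) / (n : ℚ) : ℚ), ?_⟩
    rw [ratToReal_mk]
    congr 1
    rw [hr]
    push_cast
    ring
theorem realModInt_torsion_equiv : Nonempty (RatModInt ≃+ AddCommGroup.torsion RealModInt) :=
  ⟨(AddMonoidHom.ofInjective ratToReal_injective).trans
    (AddEquiv.addSubgroupCongr ratToReal_range)⟩



theorem mem_prufer_iff {p : Nat.Primes} (x : RatModInt) :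
    x ∈ PruferGroup p ↔ ∃ k : ℕ, ((p : ℕ) : ℤ) ^ k • x = 0 := by
  rw [mem_prufer_def]
  constructor
  · rintro ⟨k, hk⟩
    refine ⟨k, ?_⟩
    have h : ((p:ℕ)^k) • x = 0 := hk ▸ addOrderOf_nsmul_eq_zero x
    rw [← natCast_zsmul] at h
    convert h using 2
    push_cast
    ring
  · rintro ⟨k, hk⟩
    have h : ((p:ℕ)^k) • x = 0 := by
      rw [← natCast_zsmul]
      convert hk using 2
      push_cast
      ring
    obtain ⟨j, _, hj⟩ := (Nat.dvd_prime_pow p.2).mp (addOrderOf_dvd_of_nsmul_eq_zero h)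
    exact ⟨j, hj⟩

theorem prufer_div_pos (p : Nat.Primes) (N : ℕ) (hN : N ≠ 0) (x : PruferGroup p) :
    ∃ y : PruferGroup p, ((N : ℤ)) • y = x := by
  classical
  set a := N.factorization p with ha
  set m := N / (p : ℕ) ^ a with hm
  have hsplit : (p : ℕ) ^ a * m = N := Nat.ordProj_mul_ordCompl_eq_self N p
  have hnd : ¬ (p : ℕ) ∣ m := Nat.not_dvd_ordCompl p.2 hN
  obtain ⟨k, hk⟩ := (mem_prufer_iff (x : RatModInt)).mp x.2
  obtain ⟨q, hq⟩ := QuotientAddGroup.mk_surjective (x : RatModInt)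
  set y₀ : RatModInt := ((q / (p : ℚ) ^ a : ℚ) : RatModInt) with hy₀def
  have hpQ : ((p : ℕ) : ℚ) ^ a ≠ 0 := pow_ne_zero _ (Nat.cast_ne_zero.mpr p.2.pos.ne')
  have h1 : ((p : ℕ) : ℤ) ^ a • y₀ = (x : RatModInt) := by
    rw [hy₀def, ← QuotientAddGroup.mk_zsmul, ← hq]
    congr 1
    rw [zsmul_eq_mul]
    push_cast
    field_simp
  have hy₀ : y₀ ∈ PruferGroup p := by
    rw [mem_prufer_iff]
    refine ⟨k + a, ?_⟩
    rw [pow_add, mul_smul, h1, hk]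
  set Y : PruferGroup p := ⟨y₀, hy₀⟩ with hY
  have hYx : ((p : ℕ) : ℤ) ^ a • Y = x := Subtype.ext (by
    rw [AddSubgroup.coe_zsmul]; exact h1)
  have hYtor : ((p : ℕ) : ℤ) ^ (k + a) • Y = 0 := Subtype.ext (by
    rw [AddSubgroup.coe_zsmul, AddSubgroup.coe_zero, pow_add, mul_smul, h1, hk])
  have hc : Nat.Coprime ((p : ℕ) ^ (k + a)) m :=
    Nat.Coprime.pow_left _ ((Nat.Prime.coprime_iff_not_dvd p.2).mpr hnd)
  obtain ⟨u, v, huv⟩ := Nat.isCoprime_iff_coprime.mpr hc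
  refine ⟨v • Y, ?_⟩
  have hN' : (N : ℤ) = ((p:ℕ):ℤ) ^ a * (m : ℤ) := by exact_mod_cast hsplit.symm
  have hscal : (N : ℤ) * v = ((p:ℕ):ℤ) ^ a - (u * ((p:ℕ):ℤ) ^ a) * ((p:ℕ):ℤ) ^ (k + a) := by
    rw [hN']
    have huv' : u * ((p:ℕ):ℤ) ^ (k+a) + v * (m : ℤ) = 1 := by exact_mod_cast huv
    linear_combination (((p:ℕ):ℤ) ^ a) * huv'
  calc (N : ℤ) • (v • Y) = ((N : ℤ) * v) • Y := by rw [mul_smul]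
    _ = (((p:ℕ):ℤ) ^ a - (u * ((p:ℕ):ℤ) ^ a) * ((p:ℕ):ℤ) ^ (k + a)) • Y := by rw [hscal]
    _ = ((p:ℕ):ℤ) ^ a • Y - (u * ((p:ℕ):ℤ) ^ a) • (((p:ℕ):ℤ) ^ (k + a) • Y) := by
        rw [sub_smul, mul_smul]
    _ = x := by rw [hYx, hYtor, smul_zero, sub_zero]

theorem prufer_div (p : Nat.Primes) :
    ∀ (n : ℤ), n ≠ 0 → ∀ x : PruferGroup p, ∃ y : PruferGroup p, n • y = x := by
  intro n hn x
  rcases lt_trichotomy n 0 with h | h | h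
  · obtain ⟨y, hy⟩ := prufer_div_pos p (-n).toNat (by omega) x
    refine ⟨-y, ?_⟩
    have : ((-n).toNat : ℤ) = -n := Int.toNat_of_nonneg (by omega)
    rw [this] at hy
    rw [← hy, neg_smul, smul_neg]
  · exact absurd h hn
  · obtain ⟨y, hy⟩ := prufer_div_pos p n.toNat (by omega) x
    refine ⟨y, ?_⟩
    rwa [Int.toNat_of_nonneg (by omega)] at hy


theorem pruferProd_div :
    ∀ (n : ℤ), n ≠ 0 → ∀ x : PruferProd, ∃ y : PruferProd, n • y = x := by
  intro n hn x
  refine ⟨fun p => Classical.choose (prufer_div p n hn (x p)), funext fun p => ?_⟩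
  exact Classical.choose_spec (prufer_div p n hn (x p))

instance (p : Nat.Primes) : Nontrivial (PruferGroup p) := by
  refine ⟨0, ⟨((1 / ((p:ℕ) : ℚ) : ℚ) : RatModInt), ?_⟩, ?_⟩
  · rw [mem_prufer_iff]
    refine ⟨1, ?_⟩
    rw [pow_one, ← QuotientAddGroup.mk_zsmul, QuotientAddGroup.eq_zero_iff]
    have hp : ((p:ℕ) : ℚ) ≠ 0 := Nat.cast_ne_zero.mpr p.2.pos.ne'
    refine ⟨1, ?_⟩
    rw [zsmul_eq_mul]
    push_cast
    field_simp
    simp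
  · intro h
    have h0 : ((1 / ((p:ℕ) : ℚ) : ℚ) : RatModInt) = 0 := (congrArg Subtype.val h).symm
    rw [QuotientAddGroup.eq_zero_iff] at h0
    obtain ⟨z, hz⟩ := h0
    have hp : ((p:ℕ) : ℚ) ≠ 0 := Nat.cast_ne_zero.mpr p.2.pos.ne'
    have hzq : (z : ℚ) = 1 / ((p:ℕ) : ℚ) := by simpa using hz
    have hzp : (z : ℚ) * ((p:ℕ) : ℚ) = 1 := by rw [hzq]; field_simp
    have hzpZ : z * ((p:ℕ) : ℤ) = 1 := by exact_mod_cast hzp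
    have : ((p:ℕ) : ℤ) ≤ 1 := Int.le_of_dvd one_pos ⟨z, by linear_combination -hzpZ⟩
    have : (2 : ℤ) ≤ ((p:ℕ) : ℤ) := by exact_mod_cast p.2.two_le
    omega

instance : Infinite Nat.Primes := Nat.infinite_setOf_prime.to_subtype

theorem pruferProd_card : #PruferProd = Cardinal.continuum := by
  have hP : #Nat.Primes = ℵ₀ := mk_eq_aleph0 _
  rw [mk_pi]
  apply le_antisymm
  · calc prod (fun p : Nat.Primes => #(PruferGroup p))
        ≤ prod (fun _ : Nat.Primes => ℵ₀) := prod_le_prod _ _ (fun p => mk_le_aleph0)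
      _ = ℵ₀ ^ ℵ₀ := by rw [prod_const, lift_id, lift_id, hP]
      _ = Cardinal.continuum := aleph0_power_aleph0
  · calc Cardinal.continuum = (2 : Cardinal) ^ ℵ₀ := two_power_aleph0.symm
      _ = prod (fun _ : Nat.Primes => (2 : Cardinal)) := by rw [prod_const, lift_id, lift_id, hP]
      _ ≤ prod (fun p : Nat.Primes => #(PruferGroup p)) :=
          prod_le_prod _ _ (fun p => (two_le_iff.mpr (by
            obtain ⟨x, y, hxy⟩ := exists_pair_ne (PruferGroup p); exact ⟨x, y, hxy⟩)))


abbrev PruferSum : Type := ⨁ p : Nat.Primes, PruferGroup p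

noncomputable def map1 : PruferSum →+ RatModInt :=
  DirectSum.toAddMonoid (fun p => (PruferGroup p).subtype)

theorem map1_of (p : Nat.Primes) (z : PruferGroup p) :
    map1 (DirectSum.of _ p z) = (z : RatModInt) :=
  DirectSum.toAddMonoid_of _ _ _

theorem prufer_fin_ord {p : Nat.Primes} (z : PruferGroup p) : IsOfFinAddOrder z := by
  rw [← addOrderOf_pos_iff, ← addOrderOf_injective (PruferGroup p).subtype
    Subtype.coe_injective z, addOrderOf_pos_iff]
  exact ratModInt_torsion _

theorem prufer_coe_addOrderOf {p : Nat.Primes} (z : PruferGroup p) :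
    addOrderOf (z : RatModInt) = addOrderOf z :=
  addOrderOf_injective (PruferGroup p).subtype Subtype.coe_injective z

theorem map1_injective : Function.Injective map1 := by
  classical
  rw [injective_iff_map_eq_zero]
  intro d hd
  by_contra hne
  obtain ⟨q, hq⟩ : ∃ q, d q ≠ 0 := by
    by_contra h
    push_neg at h
    exact hne (DFinsupp.ext h)
  have hqs : q ∈ d.support := DFinsupp.mem_support_iff.mpr hq
  set s := d.support with hs
  have hsum : map1 d = ∑ p ∈ s, ((d p : RatModInt)) := by
    show (DFinsupp.sumAddHom fun p => (PruferGroup p).subtype) d = _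
    exact DFinsupp.sumAddHom_apply _ d
  set N := ∏ p ∈ s.erase q, addOrderOf ((d p : RatModInt)) with hN
  have hterm : ∀ p ∈ s.erase q, N • ((d p : RatModInt)) = 0 := by
    intro p hp
    exact addOrderOf_dvd_iff_nsmul_eq_zero.mp (Finset.dvd_prod_of_mem _ hp)
  have hNq : N • ((d q : RatModInt)) = 0 := by
    have h0 : N • map1 d = 0 := by rw [hd, smul_zero]
    rw [hsum, Finset.smul_sum] at h0
    rw [← Finset.add_sum_erase s _ hqs] at h0
    rw [Finset.sum_congr rfl hterm, Finset.sum_const, smul_zero, add_zero] at h0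
    exact h0
  have hdvd : addOrderOf ((d q : RatModInt)) ∣ N := addOrderOf_dvd_of_nsmul_eq_zero hNq
  obtain ⟨j, hj⟩ := (mem_prufer_def _).mp (d q).2
  have hj0 : j ≠ 0 := by
    intro h
    rw [h, pow_zero, AddMonoid.addOrderOf_eq_one_iff] at hj
    exact hq (Subtype.ext hj)
  have hqdvd : (q : ℕ) ∣ N := dvd_trans (hj ▸ dvd_pow_self _ hj0) hdvd
  have hcop : Nat.Coprime (q : ℕ) N := by
    apply Nat.Coprime.prod_right
    intro p hp
    obtain ⟨jp, hjp⟩ := (mem_prufer_def _).mp (d p).2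
    rw [hjp]
    have hne' : (q : ℕ) ≠ (p : ℕ) := by
      intro h
      exact (Finset.mem_erase.mp hp).1 (Subtype.ext h.symm) |>.elim
    exact ((Nat.coprime_primes q.2 p.2).mpr hne').pow_right _
  have h1 : (q : ℕ) ∣ 1 := hcop ▸ Nat.dvd_gcd dvd_rfl hqdvd
  exact q.2.ne_one (Nat.dvd_one.mp h1)

theorem map1_surjective : Function.Surjective map1 := by
  classical
  have key : ∀ n : ℕ, ∀ x : RatModInt, addOrderOf x = n → x ∈ map1.range := by
    intro n
    induction n using Nat.strong_induction_on with
    | _ n IH =>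
      intro x hx
      have hfin := ratModInt_torsion x
      have hpos : 0 < n := hx ▸ hfin.addOrderOf_pos
      by_cases h1 : n = 1
      · have : x = 0 := AddMonoid.addOrderOf_eq_one_iff.mp (hx.trans h1)
        rw [this]; exact zero_mem _
      -- main case
      set p := n.minFac with hpdef
      have hp : p.Prime := Nat.minFac_prime h1
      set P : Nat.Primes := ⟨p, hp⟩ with hP
      set a := n.factorization p with hadef
      set m := n / p ^ a with hmdef
      have hsplit : p ^ a * m = n := Nat.ordProj_mul_ordCompl_eq_self n p
      have hm0 : 0 < m := Nat.ordCompl_pos p hpos.ne'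
      have hnx : (n : ℤ) • x = 0 := by
        rw [natCast_zsmul, ← hx]
        exact addOrderOf_nsmul_eq_zero x
      by_cases hm : m = 1
      · have hxP : x ∈ PruferGroup P := (mem_prufer_def x).mpr ⟨a, by
          rw [hx]; rw [hm, mul_one] at hsplit; exact hsplit.symm⟩
        exact ⟨DirectSum.of _ P ⟨x, hxP⟩, map1_of P ⟨x, hxP⟩⟩
      · have ha : 0 < a := by
          rw [hadef]
          exact Nat.Prime.factorization_pos_of_dvd hp hpos.ne' (Nat.minFac_dvd n)
        have hpa1 : 1 < p ^ a := Nat.one_lt_pow ha.ne' hp.one_lt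
        have hmn : m < n := by
          rw [← hsplit]
          exact lt_mul_of_one_lt_left hm0 hpa1
        have hpan : p ^ a < n := by
          rw [← hsplit]
          exact lt_mul_of_one_lt_right (by positivity) (by omega)
        have hc : Nat.Coprime (p ^ a) m :=
          (Nat.coprime_ordCompl hp hpos.ne').pow_left _
        obtain ⟨u, v, huv⟩ := Nat.isCoprime_iff_coprime.mpr hc
        set y₁ := (u * (p ^ a : ℕ) : ℤ) • x with hy₁
        set y₂ := (v * (m : ℕ) : ℤ) • x with hy₂
        have hxsum : x = y₁ + y₂ := by
          rw [hy₁, hy₂, ← add_smul]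
          rw [show (u * ((p:ℕ) ^ a : ℕ) : ℤ) + v * (m : ℕ) = 1 by exact_mod_cast huv]
          rw [one_smul]
        have hy₁mem : y₁ ∈ map1.range := by
          have hdvd : addOrderOf y₁ ∣ m := by
            apply addOrderOf_dvd_of_nsmul_eq_zero
            rw [← natCast_zsmul, hy₁, ← mul_smul]
            rw [show (m : ℤ) * (u * ((p ^ a : ℕ) : ℤ)) = u * (n : ℤ) by
              push_cast [← hsplit]; ring]
            rw [mul_smul, hnx, smul_zero]
          exact IH (addOrderOf y₁) (lt_of_le_of_lt (Nat.le_of_dvd hm0 hdvd) hmn) y₁ rfl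
        have hy₂mem : y₂ ∈ map1.range := by
          have hdvd : addOrderOf y₂ ∣ p ^ a := by
            apply addOrderOf_dvd_of_nsmul_eq_zero
            rw [← natCast_zsmul, hy₂, ← mul_smul]
            rw [show ((p ^ a : ℕ) : ℤ) * (v * (m : ℕ)) = v * (n : ℤ) by
              push_cast [← hsplit]; ring]
            rw [mul_smul, hnx, smul_zero]
          obtain ⟨j, _, hj⟩ := (Nat.dvd_prime_pow hp).mp hdvd
          have hy₂P : y₂ ∈ PruferGroup P := (mem_prufer_def y₂).mpr ⟨j, hj⟩
          exact ⟨DirectSum.of _ P ⟨y₂, hy₂P⟩, map1_of P ⟨y₂, hy₂P⟩⟩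
        rw [hxsum]
        exact AddSubgroup.add_mem _ hy₁mem hy₂mem
  intro x
  obtain ⟨d, hd⟩ := key (addOrderOf x) x rfl
  exact ⟨d, hd⟩

noncomputable def map2 : PruferSum →+ PruferProd := DFinsupp.coeFnAddMonoidHom

theorem map2_apply (d : PruferSum) (p : Nat.Primes) : map2 d p = d p := rfl

theorem map2_injective : Function.Injective map2 := by
  intro a b h
  exact DFinsupp.ext fun p => congrFun h p

theorem map2_torsion (d : PruferSum) : IsOfFinAddOrder (map2 d) := by
  classical
  rw [isOfFinAddOrder_iff_nsmul_eq_zero]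
  refine ⟨∏ p ∈ d.support, addOrderOf (d p), ?_, ?_⟩
  · apply Finset.prod_pos
    intro p _
    exact (prufer_fin_ord (d p)).addOrderOf_pos
  · funext p
    rw [Pi.smul_apply, map2_apply]
    by_cases hp : p ∈ d.support
    · exact addOrderOf_dvd_iff_nsmul_eq_zero.mp (Finset.dvd_prod_of_mem _ hp)
    · rw [DFinsupp.notMem_support_iff.mp hp, smul_zero]
      rfl

theorem map2_surj_torsion (x : PruferProd) (hx : IsOfFinAddOrder x) :
    ∃ d : PruferSum, map2 d = x := by
  classical
  obtain ⟨n, npos, hn⟩ := isOfFinAddOrder_iff_nsmul_eq_zero.mp hx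
  have hS : {p : Nat.Primes | x p ≠ 0}.Finite := by
    have hsub : {p : Nat.Primes | x p ≠ 0} ⊆ (fun p : Nat.Primes => (p : ℕ)) ⁻¹' {m : ℕ | m ∣ n} := by
      intro p hp
      have hnp : n • x p = 0 := by
        have := congrFun hn p
        rwa [Pi.smul_apply] at this
      have hdvd : addOrderOf (x p) ∣ n := addOrderOf_dvd_of_nsmul_eq_zero hnp
      obtain ⟨j, hj⟩ := (mem_prufer_def _).mp (x p).2
      rw [prufer_coe_addOrderOf] at hj
      have hj0 : j ≠ 0 := by
        intro h0
        rw [h0, pow_zero, AddMonoid.addOrderOf_eq_one_iff] at hj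
        exact hp hj
      exact dvd_trans (hj ▸ dvd_pow_self _ hj0) hdvd
    refine Set.Finite.subset (Set.Finite.preimage ?_ ?_) hsub
    · exact Set.injOn_of_injective Nat.Primes.coe_nat_injective
    · exact Set.Finite.subset (Set.finite_Iic n) (fun m hm => Nat.le_of_dvd npos hm)
  refine ⟨DFinsupp.mk hS.toFinset (fun p => x p), funext fun p => ?_⟩
  rw [map2_apply, DFinsupp.mk_apply]
  by_cases hp : p ∈ hS.toFinset
  · simp [hp]
  · rw [dif_neg hp]
    have : ¬ x p ≠ 0 := by
      intro h
      exact hp (hS.mem_toFinset.mpr h)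
    exact (not_not.mp this).symm

theorem pruferProd_torsion_equiv :
    Nonempty (RatModInt ≃+ AddCommGroup.torsion PruferProd) := by
  have e1 : PruferSum ≃+ RatModInt :=
    AddEquiv.ofBijective map1 ⟨map1_injective, map1_surjective⟩
  have hcod : ∀ d : PruferSum, map2 d ∈ AddCommGroup.torsion PruferProd := fun d => map2_torsion d
  set f : PruferSum →+ AddCommGroup.torsion PruferProd :=
    map2.codRestrict _ hcod with hf
  have hfbij : Function.Bijective f := by
    constructor
    · intro a b h
      exact map2_injective (congrArg Subtype.val h)
    · rintro ⟨x, hx⟩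
      obtain ⟨d, hd⟩ := map2_surj_torsion x hx
      exact ⟨d, Subtype.ext hd⟩
  exact ⟨e1.symm.trans (AddEquiv.ofBijective f hfbij)⟩


/-- The direct product `∏_p ℤ(p^∞)` over all primes is isomorphic to the circle group
`𝕋 = ℝ/ℤ`. -/
theorem pi_prufer_equiv_real_mod_int :
    Nonempty (((p : Nat.Primes) → PruferGroup p) ≃+
      (ℝ ⧸ AddSubgroup.zmultiples (1 : ℝ))) := by
  obtain ⟨eP⟩ := pruferProd_torsion_equiv
  obtain ⟨eR⟩ := realModInt_torsion_equiv
  have hcnt : Countable (AddCommGroup.torsion PruferProd) := Countable.of_equiv _ eP.toEquiv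
  exact master pruferProd_div realModInt_div ⟨eP.symm.trans eR⟩ hcnt
    pruferProd_card realModInt_card
end
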